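/- arXiv:hep-th/0410135 — 6 statements merged into one kernel-verified Lean document; each statement's English description precedes it below -/
import Mathlib

section
/- The family of n² − 1 matrices (X_{(r,s)})_{(r,s) ∈ ℤ_n × ℤ_n, (r,s) ≠ (0,0)} is a basis of sl(n,ℂ), the ℂ-subspace of n×n complex matrices of trace zero. (This gives the Pauli grading of sl(n,ℂ) into n² − 1 one-dimensional subspaces.) -/
open Matrix

/-- ω = exp(2πi/n). -/
noncomputable def om (n : ℕ) : ℂ := Complex.exp (2 * Real.pi * Complex.I / n)

/-- The diagonal matrix Q = diag(1, ω, ω², …, ω^{n-1}). -/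
noncomputable def Qm (n : ℕ) : Matrix (Fin n) (Fin n) ℂ :=
  Matrix.diagonal fun j => om n ^ (j : ℕ)

/-- The matrix P with P_{j,k} = 1 if k ≡ j + 1 (mod n) and 0 otherwise. -/
noncomputable def Pm (n : ℕ) : Matrix (Fin n) (Fin n) ℂ :=
  Matrix.of fun j k => if ((k : ℕ) : ZMod n) = ((j : ℕ) : ZMod n) + 1 then 1 else 0

/-- X_{(r,s)} = Q^r P^s for (r,s) ∈ ℤ_n × ℤ_n. -/
noncomputable def Xm (n : ℕ) (u : ZMod n × ZMod n) : Matrix (Fin n) (Fin n) ℂ :=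
  Qm n ^ u.1.val * Pm n ^ u.2.val

/-- sl(n,ℂ): the subspace of n×n complex matrices of trace zero. -/
noncomputable def slC (n : ℕ) : Submodule ℂ (Matrix (Fin n) (Fin n) ℂ) :=
  LinearMap.ker (Matrix.traceLinearMap (Fin n) ℂ ℂ)

set_option linter.unusedSectionVars false

variable {n : ℕ} [NeZero n]

/-- the equiv ZMod n ≃ Fin n -/
noncomputable def zf (n : ℕ) [NeZero n] : ZMod n ≃ Fin n where
  toFun z := ⟨z.val, ZMod.val_lt z⟩
  invFun j := ((j : ℕ) : ZMod n)
  left_inv z := ZMod.natCast_zmod_val z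
  right_inv j := by ext; simp [ZMod.val_cast_of_lt j.isLt]

@[simp] lemma zf_cast (z : ZMod n) : (((zf n z : Fin n) : ℕ) : ZMod n) = z := by
  simp [zf, ZMod.natCast_zmod_val]

lemma hom : IsPrimitiveRoot (om n) n := Complex.isPrimitiveRoot_exp n (NeZero.ne n)

lemma om_ne_zero : om n ≠ 0 := Complex.exp_ne_zero _

lemma geom {x : ℂ} (hx : x ^ n = 1) (h1 : x ≠ 1) : ∑ j : Fin n, x ^ (j : ℕ) = 0 := by
  rw [Fin.sum_univ_eq_sum_range]
  have h := geom_sum_mul x n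
  rw [hx, sub_self] at h
  exact (mul_eq_zero.mp h).resolve_right (sub_ne_zero.mpr h1)

lemma orth (r r₀ : ZMod n) :
    ∑ j : Fin n, om n ^ (r.val * (j : ℕ)) * (om n ^ (r₀.val * (j : ℕ)))⁻¹
      = if r = r₀ then (n : ℂ) else 0 := by
  set x : ℂ := om n ^ r.val * (om n ^ r₀.val)⁻¹ with hxdef
  have hterm : ∀ j : Fin n, om n ^ (r.val * (j : ℕ)) * (om n ^ (r₀.val * (j : ℕ)))⁻¹ = x ^ (j : ℕ) := by
    intro j
    rw [hxdef, mul_pow, pow_mul, pow_mul, inv_pow]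
  rw [Finset.sum_congr rfl fun j _ => hterm j]
  by_cases h : r = r₀
  · subst h
    have : x = 1 := mul_inv_cancel₀ (pow_ne_zero _ om_ne_zero)
    simp [this, Finset.card_univ]
  · have hxn : x ^ n = 1 := by
      have key : ∀ a : ℕ, (om n ^ a) ^ n = 1 := fun a => by
        rw [← pow_mul, mul_comm a n, pow_mul, hom.pow_eq_one, one_pow]
      calc x ^ n = (om n ^ r.val) ^ n * ((om n ^ r₀.val) ^ n)⁻¹ := by
            rw [hxdef, mul_pow, inv_pow]
        _ = 1 := by rw [key, key, inv_one, mul_one]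
    have hx1 : x ≠ 1 := by
      intro hx1
      apply h
      have : om n ^ r.val = om n ^ r₀.val := by
        rw [hxdef, mul_inv_eq_one₀ (pow_ne_zero _ om_ne_zero)] at hx1
        exact hx1
      have := hom.pow_inj (ZMod.val_lt r) (ZMod.val_lt r₀) this
      calc r = ((r.val : ℕ) : ZMod n) := (ZMod.natCast_zmod_val r).symm
        _ = ((r₀.val : ℕ) : ZMod n) := by rw [this]
        _ = r₀ := ZMod.natCast_zmod_val r₀
    simp [geom hxn hx1, h]

lemma Pm_pow_apply (b : ℕ) (j k : Fin n) :
    (Pm n ^ b) j k = if ((k : ℕ) : ZMod n) = ((j : ℕ) : ZMod n) + b then 1 else 0 := by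
  induction b generalizing k with
  | zero =>
    simp only [pow_zero, Nat.cast_zero, add_zero]
    by_cases h : j = k
    · subst h; simp [Matrix.one_apply]
    · rw [Matrix.one_apply_ne' (Ne.symm h), if_neg]
      intro hc
      exact h (by
        have := congrArg (zf n) hc
        simpa [zf, Fin.ext_iff, ZMod.val_cast_of_lt j.isLt, ZMod.val_cast_of_lt k.isLt] using this.symm)
  | succ b ih =>
    rw [pow_succ, Matrix.mul_apply]
    have : ∀ m : Fin n, (Pm n ^ b) j m * Pm n m k
        = if ((m : ℕ) : ZMod n) = ((j : ℕ) : ZMod n) + b then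
            (if ((k : ℕ) : ZMod n) = ((m : ℕ) : ZMod n) + 1 then 1 else 0) else 0 := by
      intro m
      rw [ih, Pm]
      simp only [Matrix.of_apply]
      split_ifs <;> simp
    rw [Finset.sum_congr rfl fun m _ => this m]
    rw [← Equiv.sum_comp (zf n)]
    simp only [zf_cast]
    rw [Finset.sum_ite_eq' Finset.univ (((j : ℕ) : ZMod n) + b)]
    simp [add_assoc]

lemma Qm_pow (a : ℕ) : Qm n ^ a = Matrix.diagonal fun j : Fin n => om n ^ (a * (j : ℕ)) := by
  have h : ((fun j : Fin n => om n ^ (j : ℕ)) ^ a) = fun j : Fin n => om n ^ (a * (j : ℕ)) := by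
    funext j
    rw [Pi.pow_apply, ← pow_mul, mul_comm]
  rw [Qm, Matrix.diagonal_pow, h]

lemma Xm_apply (u : ZMod n × ZMod n) (j k : Fin n) :
    Xm n u j k = if ((k : ℕ) : ZMod n) = ((j : ℕ) : ZMod n) + u.2
      then om n ^ (u.1.val * (j : ℕ)) else 0 := by
  rw [Xm, Qm_pow, Matrix.diagonal_mul, Pm_pow_apply]
  rw [ZMod.natCast_zmod_val u.2]
  split_ifs <;> simp

lemma trace_Xm (u : ZMod n × ZMod n) (hu : u ≠ (0, 0)) : Matrix.trace (Xm n u) = 0 := by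
  rw [Matrix.trace]
  simp only [Matrix.diag_apply, Xm_apply]
  by_cases hs : u.2 = 0
  · have hr : u.1 ≠ 0 := by
      intro hr; exact hu (Prod.ext hr hs)
    have hx1 : om n ^ u.1.val ≠ 1 := by
      intro hx
      apply hr
      have h0 : om n ^ (0 : ℕ) = 1 := pow_zero _
      have := hom.pow_inj (ZMod.val_lt u.1) (Nat.pos_of_ne_zero (NeZero.ne n)) (hx.trans h0.symm)
      calc u.1 = ((u.1.val : ℕ) : ZMod n) := (ZMod.natCast_zmod_val u.1).symm
        _ = 0 := by rw [this]; simp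
    have hxn : (om n ^ u.1.val) ^ n = 1 := by
      rw [← pow_mul, mul_comm, pow_mul, hom.pow_eq_one, one_pow]
    have := geom hxn hx1
    rw [← this]
    apply Finset.sum_congr rfl
    intro j _
    rw [hs, add_zero, if_pos rfl, pow_mul]
  · apply Finset.sum_eq_zero
    intro j _
    rw [if_neg]
    intro hc
    exact hs (by simpa using hc.symm)

set_option maxHeartbeats 1000000 in
lemma li_Xm : LinearIndependent ℂ (Xm n) := by
  rw [Fintype.linearIndependent_iff]
  intro g hg u₀
  obtain ⟨r₀, s₀⟩ := u₀
  have hj : ∀ j : Fin n, ∑ r : ZMod n, g (r, s₀) * om n ^ (r.val * (j : ℕ)) = 0 := by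
    intro j
    set k : Fin n := zf n (((j : ℕ) : ZMod n) + s₀) with hk
    have hkc : ((k : ℕ) : ZMod n) = ((j : ℕ) : ZMod n) + s₀ := zf_cast _
    have h0 : (∑ u, g u • Xm n u) j k = 0 := by rw [hg]; rfl
    simp only [Matrix.sum_apply, Matrix.smul_apply, smul_eq_mul, Xm_apply] at h0
    have inner : ∀ r : ZMod n,
        (∑ s : ZMod n, g (r, s) *
          (if ((k : ℕ) : ZMod n) = ((j : ℕ) : ZMod n) + s then om n ^ (r.val * (j : ℕ)) else 0))
        = g (r, s₀) * om n ^ (r.val * (j : ℕ)) := by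
      intro r
      rw [Finset.sum_eq_single s₀]
      · rw [if_pos hkc]
      · intro s _ hs
        rw [if_neg, mul_zero]
        rw [hkc]
        exact fun hcc => hs (add_left_cancel hcc).symm
      · intro h; exact absurd (Finset.mem_univ s₀) h
    calc ∑ r : ZMod n, g (r, s₀) * om n ^ (r.val * (j : ℕ))
        = ∑ r : ZMod n, ∑ s : ZMod n, g (r, s) *
            (if ((k : ℕ) : ZMod n) = ((j : ℕ) : ZMod n) + s then om n ^ (r.val * (j : ℕ)) else 0) :=
          (Finset.sum_congr rfl fun r _ => (inner r).symm)
      _ = ∑ u : ZMod n × ZMod n, g u *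
            (if ((k : ℕ) : ZMod n) = ((j : ℕ) : ZMod n) + u.2 then om n ^ (u.1.val * (j : ℕ)) else 0) :=
          (Fintype.sum_prod_type (f := fun u : ZMod n × ZMod n => g u *
            (if ((k : ℕ) : ZMod n) = ((j : ℕ) : ZMod n) + u.2 then om n ^ (u.1.val * (j : ℕ)) else 0))).symm
      _ = 0 := h0
  have h2 : ∑ r : ZMod n, g (r, s₀) *
      (∑ j : Fin n, om n ^ (r.val * (j : ℕ)) * (om n ^ (r₀.val * (j : ℕ)))⁻¹) = 0 := by
    calc ∑ r : ZMod n, g (r, s₀) *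
          (∑ j : Fin n, om n ^ (r.val * (j : ℕ)) * (om n ^ (r₀.val * (j : ℕ)))⁻¹)
        = ∑ r : ZMod n, ∑ j : Fin n,
            (g (r, s₀) * om n ^ (r.val * (j : ℕ))) * (om n ^ (r₀.val * (j : ℕ)))⁻¹ := by
          simp_rw [Finset.mul_sum, mul_assoc]
      _ = ∑ j : Fin n, (∑ r : ZMod n, g (r, s₀) * om n ^ (r.val * (j : ℕ)))
            * (om n ^ (r₀.val * (j : ℕ)))⁻¹ := by
          rw [Finset.sum_comm]
          simp_rw [Finset.sum_mul]
      _ = 0 := by simp [hj]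
  have h3 : g (r₀, s₀) * (n : ℂ) = 0 := by
    rw [← h2]
    simp_rw [orth, mul_ite, mul_zero]
    rw [Finset.sum_ite_eq' Finset.univ r₀ (fun r => g (r, s₀) * (n : ℂ))]
    simp
  have hn0 : (n : ℂ) ≠ 0 := Nat.cast_ne_zero.mpr (NeZero.ne n)
  exact (mul_eq_zero.mp h3).resolve_right hn0

lemma finrank_slC (hn : 1 ≤ n) : Module.finrank ℂ (slC n) = n * n - 1 := by
  have hsurj : Function.Surjective (Matrix.traceLinearMap (Fin n) ℂ ℂ) := by
    intro c
    refine ⟨Matrix.diagonal (Pi.single ⟨0, hn⟩ c), ?_⟩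
    simp [Matrix.trace_diagonal]
  have h1 := LinearMap.finrank_range_add_finrank_ker (Matrix.traceLinearMap (Fin n) ℂ ℂ)
  rw [LinearMap.range_eq_top.mpr hsurj, finrank_top, Module.finrank_self] at h1
  have h2 : Module.finrank ℂ (Matrix (Fin n) (Fin n) ℂ) = n * n := by
    rw [Module.finrank_matrix]
    simp
  rw [h2] at h1
  have : Module.finrank ℂ (slC n)
      = Module.finrank ℂ (LinearMap.ker (Matrix.traceLinearMap (Fin n) ℂ ℂ)) := rfl
  omega

lemma card_index : Fintype.card {u : ZMod n × ZMod n // u ≠ (0, 0)} = n * n - 1 := by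
  calc Fintype.card {u : ZMod n × ZMod n // u ≠ (0, 0)}
      = Fintype.card (ZMod n × ZMod n) - Fintype.card {u : ZMod n × ZMod n // u = (0, 0)} :=
        Fintype.card_subtype_compl _
    _ = n * n - 1 := by simp [ZMod.card, Fintype.card_subtype_eq]

/-- The family (X_{(r,s)})_{(r,s) ≠ (0,0)} is a basis of sl(n,ℂ). -/
theorem stmt5 (n : ℕ) (hn : 1 ≤ n) :
    ∃ b : Module.Basis {u : ZMod n × ZMod n // u ≠ (0, 0)} ℂ (slC n),
      ∀ u, (b u : Matrix (Fin n) (Fin n) ℂ) = Xm n u.val := by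
  haveI : NeZero n := ⟨Nat.one_le_iff_ne_zero.mp hn⟩
  by_cases h1 : n = 1
  · subst h1
    haveI : IsEmpty {u : ZMod 1 × ZMod 1 // u ≠ (0, 0)} :=
      ⟨fun u => u.2 (Subsingleton.elim _ _)⟩
    haveI : Subsingleton (slC 1) := by
      constructor
      intro a b
      apply Subtype.ext
      have key : ∀ x : slC 1, (x : Matrix (Fin 1) (Fin 1) ℂ) = 0 := by
        rintro ⟨x, hx⟩
        have htr : Matrix.trace x = 0 := hx
        ext i j
        fin_cases i; fin_cases j
        simpa [Matrix.trace, Fin.sum_univ_one] using htr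
      rw [key a, key b]
    exact ⟨Module.Basis.empty _, fun u => isEmptyElim u⟩
  · have h2 : 2 ≤ n := by omega
    haveI : Fact (1 < n) := ⟨h2⟩
    haveI : Nonempty {u : ZMod n × ZMod n // u ≠ (0, 0)} :=
      ⟨⟨(0, 1), fun hc => one_ne_zero (congrArg Prod.snd hc)⟩⟩
    have hmem : ∀ u : {u : ZMod n × ZMod n // u ≠ (0, 0)}, Xm n u.val ∈ slC n := by
      intro u
      simpa [slC, LinearMap.mem_ker] using trace_Xm u.val u.prop
    set v : {u : ZMod n × ZMod n // u ≠ (0, 0)} → slC n := fun u => ⟨Xm n u.val, hmem u⟩ with hv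
    have hli : LinearIndependent ℂ v := by
      apply LinearIndependent.of_comp (slC n).subtype
      have hc : (slC n).subtype ∘ v = fun u => Xm n u.val := rfl
      rw [hc]
      exact li_Xm.comp Subtype.val Subtype.val_injective
    have hcard : Fintype.card {u : ZMod n × ZMod n // u ≠ (0, 0)} = Module.finrank ℂ (slC n) := by
      rw [card_index, finrank_slC hn]
    refine ⟨basisOfLinearIndependentOfCardEqFinrank hli hcard, fun u => ?_⟩
    rw [coe_basisOfLinearIndependentOfCardEqFinrank]
end

section
/- Let n ≥ 1 and let A, B be invertible n×n complex matrices. The inner automorphisms Ad_A and Ad_B commute, i.e. B⁻¹(A⁻¹ X A)B = A⁻¹(B⁻¹ X B)A for every n×n complex matrix X, if and only if there exists q ∈ ℂ with A·B = q·(B·A) and qⁿ = 1. -/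
open Matrix

set_option maxHeartbeats 1000000 in
/-- For invertible n×n complex matrices A and B, the inner automorphisms
    Ad_A : X ↦ A⁻¹ X A and Ad_B : X ↦ B⁻¹ X B commute if and only if
    there exists q ∈ ℂ with A·B = q·(B·A) and qⁿ = 1. -/
theorem stmt8 (n : ℕ) (hn : 1 ≤ n) (A B : Matrix (Fin n) (Fin n) ℂ)
    (hA : IsUnit A) (hB : IsUnit B) :
    (∀ X : Matrix (Fin n) (Fin n) ℂ,
        B⁻¹ * (A⁻¹ * X * A) * B = A⁻¹ * (B⁻¹ * X * B) * A) ↔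
      ∃ q : ℂ, A * B = q • (B * A) ∧ q ^ n = 1 := by
  have hdA : IsUnit A.det := (Matrix.isUnit_iff_isUnit_det A).mp hA
  have hdB : IsUnit B.det := (Matrix.isUnit_iff_isUnit_det B).mp hB
  constructor
  · intro h
    set P := A * B * A⁻¹ * B⁻¹ with hP
    have hcomm : ∀ X : Matrix (Fin n) (Fin n) ℂ, X * P = P * X := by
      intro X
      have h2 := congrArg (fun Y : Matrix (Fin n) (Fin n) ℂ => A * B * Y * (A⁻¹ * B⁻¹)) (h X)
      simp only [mul_assoc] at h2 ⊢
      rw [Matrix.mul_nonsing_inv_cancel_left B _ hdB,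
          Matrix.mul_nonsing_inv_cancel_left A _ hdA,
          Matrix.mul_nonsing_inv_cancel_left A (B⁻¹) hdA,
          Matrix.mul_nonsing_inv B hdB, mul_one] at h2
      rw [hP]
      simp only [mul_assoc]
      exact h2
    obtain ⟨q, hq⟩ := Matrix.mem_range_scalar_of_commute_single
      (M := P) (fun i j _ => hcomm _)
    have hq1 : P = q • (1 : Matrix (Fin n) (Fin n) ℂ) := by
      rw [← hq]; ext i j
      simp [Matrix.scalar_apply, Matrix.one_apply, Matrix.diagonal_apply, Matrix.smul_apply]
    have hAB : A * B = q • (B * A) := by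
      have h3 : P * B * A = A * B := by
        rw [hP, Matrix.nonsing_inv_mul_cancel_right B _ hdB,
            Matrix.nonsing_inv_mul_cancel_right A _ hdA]
      rw [← h3, hq1]
      simp [Matrix.smul_mul]
    refine ⟨q, hAB, ?_⟩
    have hdet := congrArg Matrix.det hAB
    rw [Matrix.det_smul, Matrix.det_mul, Matrix.det_mul, Fintype.card_fin,
        mul_comm B.det A.det] at hdet
    have hne : A.det * B.det ≠ 0 := mul_ne_zero hdA.ne_zero hdB.ne_zero
    have h4 : 1 * (A.det * B.det) = q ^ n * (A.det * B.det) := by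
      rw [one_mul]; exact hdet
    exact (mul_right_cancel₀ hne h4).symm
  · rintro ⟨q, hq, hqn⟩
    have hq0 : q ≠ 0 := by
      intro h0
      rw [h0, zero_pow (by omega)] at hqn
      exact one_ne_zero hqn.symm
    letI : Invertible q := invertibleOfNonzero hq0
    intro X
    have hdBA : IsUnit (B * A).det := by
      rw [Matrix.det_mul]; exact hdB.mul hdA
    have key : (A * B)⁻¹ * X * (A * B) = (B * A)⁻¹ * X * (B * A) := by
      rw [hq, Matrix.inv_smul (A := B * A) q hdBA, Matrix.smul_mul, Matrix.smul_mul,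
          Matrix.mul_smul, smul_smul, invOf_mul_self, one_smul]
    rw [Matrix.mul_inv_rev A B, Matrix.mul_inv_rev B A] at key
    simp only [mul_assoc] at key ⊢
    exact key
end

section
/- Let n ≥ 1 and let C be an invertible n×n complex matrix. The ℂ-linear endomorphism Out_C : X ↦ −(C⁻¹ X C)ᵀ of the space of n×n complex matrices admits a basis of eigenvectors (i.e., there is a basis (b_i) of M_n(ℂ) and scalars μ_i ∈ ℂ with Out_C(b_i) = μ_i · b_i for all i) if and only if the matrix C·(Cᵀ)⁻¹ is diagonalizable (i.e., there exist an invertible matrix S and a diagonal matrix D with C(Cᵀ)⁻¹ = S D S⁻¹). -/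
open Matrix

section Stmt9Aux

variable {n : ℕ}

private lemma transpose_sbm (j k : Fin n) :
    (Matrix.single j k (1 : ℂ))ᵀ = Matrix.single k j 1 := by
  ext a b
  simp [Matrix.single, and_comm]

private lemma diagonal_mul_sbm (D : Fin n → ℂ) (j k : Fin n) :
    Matrix.diagonal D * Matrix.single j k 1 = D j • Matrix.single j k 1 := by
  ext a b
  simp [Matrix.mul_apply, Matrix.single, Matrix.diagonal, ite_and]
  aesop

/-- Left multiplication by an invertible matrix, as a linear equivalence. -/
private noncomputable def lmulEquiv (C : Matrix (Fin n) (Fin n) ℂ) [Invertible C] :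
    Matrix (Fin n) (Fin n) ℂ ≃ₗ[ℂ] Matrix (Fin n) (Fin n) ℂ :=
  LinearEquiv.ofLinear (LinearMap.mulLeft ℂ C) (LinearMap.mulLeft ℂ C⁻¹)
    (by
      ext X
      simp [Matrix.mul_inv_cancel_left_of_invertible])
    (by
      ext X
      simp [Matrix.inv_mul_cancel_left_of_invertible])

@[simp] private lemma lmulEquiv_apply (C : Matrix (Fin n) (Fin n) ℂ) [Invertible C]
    (X : Matrix (Fin n) (Fin n) ℂ) : lmulEquiv C X = C * X := rfl

@[simp] private lemma lmulEquiv_symm_apply (C : Matrix (Fin n) (Fin n) ℂ) [Invertible C]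
    (X : Matrix (Fin n) (Fin n) ℂ) : (lmulEquiv C).symm X = C⁻¹ * X := rfl

/-- `X ↦ R * X * Rᵀ` as a linear equivalence, for invertible `R`. -/
private noncomputable def conjEquiv (R : Matrix (Fin n) (Fin n) ℂ) [Invertible R] :
    Matrix (Fin n) (Fin n) ℂ ≃ₗ[ℂ] Matrix (Fin n) (Fin n) ℂ :=
  LinearEquiv.ofLinear
    ((LinearMap.mulLeft ℂ R).comp (LinearMap.mulRight ℂ Rᵀ))
    ((LinearMap.mulLeft ℂ R⁻¹).comp (LinearMap.mulRight ℂ (Rᵀ)⁻¹))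
    (by
      ext X
      simp [← Matrix.mul_assoc, Matrix.mul_inv_of_invertible,
        Matrix.inv_mul_cancel_right_of_invertible])
    (by
      ext X
      simp [← Matrix.mul_assoc, Matrix.inv_mul_of_invertible,
        Matrix.mul_inv_cancel_right_of_invertible])

@[simp] private lemma conjEquiv_apply (R : Matrix (Fin n) (Fin n) ℂ) [Invertible R]
    (X : Matrix (Fin n) (Fin n) ℂ) : conjEquiv R X = R * X * Rᵀ := by
  simp [conjEquiv, Matrix.mul_assoc]

/-- Forward direction: an eigenbasis for `Out_C` gives diagonalizability of `C (Cᵀ)⁻¹`. -/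
private theorem stmt9_fwd (hn : 1 ≤ n) (C : Matrix (Fin n) (Fin n) ℂ) (hC : IsUnit C)
    (ι : Type) (b : Module.Basis ι ℂ (Matrix (Fin n) (Fin n) ℂ)) (μ : ι → ℂ)
    (hb : ∀ i, -(C⁻¹ * b i * C)ᵀ = μ i • b i) :
    ∃ (S : Matrix (Fin n) (Fin n) ℂ) (D : Fin n → ℂ),
      IsUnit S ∧ C * (Cᵀ)⁻¹ = S * Matrix.diagonal D * S⁻¹ := by
  haveI : Invertible C := hC.invertible
  set A : Matrix (Fin n) (Fin n) ℂ := C * (Cᵀ)⁻¹ with hA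
  haveI : Invertible ((Cᵀ)⁻¹) := by
    rw [← Matrix.transpose_nonsing_inv]
    infer_instance
  haveI : Invertible A := by rw [hA]; exact invertibleMul _ _
  have hAT : Aᵀ = C⁻¹ * Cᵀ := by
    rw [hA, Matrix.transpose_mul, Matrix.transpose_nonsing_inv, Matrix.transpose_transpose]
  set Y : ι → Matrix (Fin n) (Fin n) ℂ := fun i => C⁻¹ * b i with hY
  -- basic eigen equation transported to Y
  have hB : ∀ i, Aᵀ * (Y i)ᵀ = (-(μ i)) • Y i := by
    intro i
    have h := hb i
    rw [Matrix.transpose_mul] at h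
    have h2 : Cᵀ * (C⁻¹ * b i)ᵀ = -(μ i • b i) := neg_eq_iff_eq_neg.mp h
    calc Aᵀ * (Y i)ᵀ = C⁻¹ * (Cᵀ * (C⁻¹ * b i)ᵀ) := by rw [hAT, Matrix.mul_assoc]
      _ = C⁻¹ * ((-(μ i)) • b i) := by rw [h2, neg_smul]
      _ = (-(μ i)) • Y i := by rw [Matrix.mul_smul]
  have htr : ∀ i, Y i * A = (-(μ i)) • (Y i)ᵀ := by
    intro i
    have h3 := congrArg Matrix.transpose (hB i)
    rwa [Matrix.transpose_mul, Matrix.transpose_transpose, Matrix.transpose_smul,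
      Matrix.transpose_transpose] at h3
  have key : ∀ i, Aᵀ * Y i * A = ((μ i) ^ 2) • Y i := by
    intro i
    calc Aᵀ * Y i * A = Aᵀ * (Y i * A) := by rw [Matrix.mul_assoc]
      _ = Aᵀ * ((-(μ i)) • (Y i)ᵀ) := by rw [htr i]
      _ = (-(μ i)) • (Aᵀ * (Y i)ᵀ) := by rw [Matrix.mul_smul]
      _ = (-(μ i)) • ((-(μ i)) • Y i) := by rw [hB i]
      _ = ((μ i) ^ 2) • Y i := by rw [smul_smul, neg_mul_neg, sq]
  -- an eigenvector of A
  haveI : Nonempty (Fin n) := ⟨⟨0, hn⟩⟩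
  obtain ⟨lam, hlam⟩ := Module.End.exists_eigenvalue (Matrix.mulVecLin A)
  obtain ⟨v, hv⟩ := hlam.exists_hasEigenvector
  have hAv : A *ᵥ v = lam • v := by
    have := hv.apply_eq_smul
    simpa [Matrix.mulVecLin_apply] using this
  have hv0 : v ≠ 0 := hv.right
  have hlam0 : lam ≠ 0 := by
    intro h0
    apply hv0
    have h1 : A⁻¹ *ᵥ (A *ᵥ v) = 0 := by
      rw [hAv, h0, zero_smul, Matrix.mulVec_zero]
    rwa [Matrix.mulVec_mulVec, Matrix.nonsing_inv_mul A (isUnit_det_of_invertible A),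
      Matrix.one_mulVec] at h1
  -- each Y i *ᵥ v is an eigenvector (or zero) of Aᵀ
  set w : ι → (Fin n → ℂ) := fun i => Y i *ᵥ v with hwdef
  have hw : ∀ i, Aᵀ *ᵥ w i = ((μ i) ^ 2 * lam⁻¹) • w i := by
    intro i
    have h4 : lam • (Aᵀ *ᵥ w i) = ((μ i) ^ 2) • w i := by
      have h4a : Aᵀ *ᵥ (Y i *ᵥ (A *ᵥ v)) = ((μ i) ^ 2) • w i := by
        rw [Matrix.mulVec_mulVec, Matrix.mulVec_mulVec, key i, Matrix.smul_mulVec]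
      rw [hAv, Matrix.mulVec_smul, Matrix.mulVec_smul] at h4a
      exact h4a
    have h5 := congrArg (fun x => lam⁻¹ • x) h4
    simpa [smul_smul, inv_mul_cancel₀ hlam0, mul_comm] using h5
  -- the w i span everything
  let L : Matrix (Fin n) (Fin n) ℂ →ₗ[ℂ] (Fin n → ℂ) :=
    { toFun := fun M => M *ᵥ v
      map_add' := fun M N => Matrix.add_mulVec M N v
      map_smul' := fun c M => Matrix.smul_mulVec c M v }
  have hLsurj : Function.Surjective L := by
    intro u
    obtain ⟨j0, hj0⟩ : ∃ j, v j ≠ 0 := by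
      by_contra h
      push_neg at h
      exact hv0 (funext fun j => h j)
    refine ⟨Matrix.of fun p q => if q = j0 then u p * (v j0)⁻¹ else 0, ?_⟩
    funext p
    show (∑ q, (if q = j0 then u p * (v j0)⁻¹ else 0) * v q) = u p
    rw [Finset.sum_congr rfl (fun q _ => by
      rw [ite_mul, zero_mul] : ∀ q ∈ Finset.univ,
        (if q = j0 then u p * (v j0)⁻¹ else 0) * v q
          = if q = j0 then u p * (v j0)⁻¹ * v q else 0)]
    rw [Finset.sum_ite_eq' Finset.univ j0 (fun q => u p * (v j0)⁻¹ * v q)]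
    simp [mul_assoc, inv_mul_cancel₀ hj0]
  have hYb : Set.range Y = Set.range ⇑(b.map (lmulEquiv C).symm) := by
    ext x
    simp [hY, Module.Basis.map_apply]
  have hspanY : Submodule.span ℂ (Set.range Y) = ⊤ := by
    rw [hYb]
    exact Module.Basis.span_eq _
  have hspanW : Submodule.span ℂ (Set.range w) = ⊤ := by
    have h6 : Set.range w = L '' Set.range Y := by
      rw [← Set.range_comp]
      rfl
    rw [h6, Submodule.span_image, hspanY, Submodule.map_top,
      LinearMap.range_eq_top.mpr hLsurj]
  -- extract a basis of eigenvectors of Aᵀ from the spanning set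
  obtain ⟨s, hsub, -, hsp, hli⟩ := exists_linearIndepOn_id_extension
    (linearIndependent_empty ℂ (Fin n → ℂ)) (Set.empty_subset (Set.range w))
  let B2 : Module.Basis s ℂ (Fin n → ℂ) := Module.Basis.mk hli (by
    rw [show (fun x : s => id (x : Fin n → ℂ)) = Subtype.val from rfl, Subtype.range_coe]
    rw [← hspanW]
    exact Submodule.span_le.mpr hsp)
  haveI : Fintype s := FiniteDimensional.fintypeBasisIndex B2
  have hcard : Fintype.card s = n := by
    have h7 := Module.finrank_eq_card_basis B2
    rw [Module.finrank_fin_fun] at h7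
    omega
  let e : Fin n ≃ s := (Fintype.equivFinOfCardEq hcard).symm
  set S' : Matrix (Fin n) (Fin n) ℂ := Matrix.of (fun p q : Fin n => (e q : Fin n → ℂ) p) with hS'def
  -- eigenvalue of each column
  have hcolw : ∀ q : Fin n, ∃ i, w i = (e q : Fin n → ℂ) := fun q => hsub (e q).2
  let d : Fin n → ℂ := fun q => (μ (hcolw q).choose) ^ 2 * lam⁻¹
  have hcol : ∀ q : Fin n, Aᵀ *ᵥ (e q : Fin n → ℂ) = d q • (e q : Fin n → ℂ) := by
    intro q
    rw [← (hcolw q).choose_spec]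
    exact hw _
  have hAS : Aᵀ * S' = S' * Matrix.diagonal d := by
    ext p q
    have h8 := congrFun (hcol q) p
    simp only [Matrix.mulVec, dotProduct, Pi.smul_apply, smul_eq_mul] at h8
    rw [Matrix.mul_apply, Matrix.mul_diagonal]
    simp only [hS'def, Matrix.of_apply]
    rw [h8, mul_comm]
  have hS' : IsUnit S' := by
    let B3 : Module.Basis (Fin n) ℂ (Fin n → ℂ) := B2.reindex e.symm
    have h9 : S' = (Pi.basisFun ℂ (Fin n)).toMatrix ⇑B3 := by
      ext p q
      simp [Module.Basis.toMatrix_apply, B3, B2, Module.Basis.mk_apply, hS'def]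
    rw [h9]
    haveI := (Pi.basisFun ℂ (Fin n)).invertibleToMatrix B3
    exact isUnit_of_invertible _
  haveI : Invertible S' := hS'.invertible
  have hdet : IsUnit S'.det := isUnit_det_of_invertible S'
  have hATeq : Aᵀ = S' * Matrix.diagonal d * S'⁻¹ := by
    rw [← hAS, Matrix.mul_nonsing_inv_cancel_right _ _ hdet]
  haveI : Invertible S'⁻¹ :=
    ⟨S', Matrix.mul_inv_of_invertible S', Matrix.inv_mul_of_invertible S'⟩
  haveI : Invertible ((S'⁻¹)ᵀ) := Matrix.invertibleTranspose _
  refine ⟨(S'⁻¹)ᵀ, d, isUnit_of_invertible _, ?_⟩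
  have h10 := congrArg Matrix.transpose hATeq
  rw [Matrix.transpose_transpose, Matrix.transpose_mul, Matrix.transpose_mul,
    Matrix.diagonal_transpose] at h10
  have h11 : ((S'⁻¹)ᵀ)⁻¹ = S'ᵀ := by
    rw [Matrix.transpose_nonsing_inv,
      Matrix.nonsing_inv_nonsing_inv _ (by rwa [Matrix.det_transpose])]
  rw [h11, Matrix.mul_assoc]
  exact h10


/-- Backward direction: diagonalizability of `C (Cᵀ)⁻¹` gives an eigenbasis for `Out_C`. -/
private theorem stmt9_bwd (C : Matrix (Fin n) (Fin n) ℂ) (hC : IsUnit C)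
    (S : Matrix (Fin n) (Fin n) ℂ) (D : Fin n → ℂ) (hS : IsUnit S)
    (hA : C * (Cᵀ)⁻¹ = S * Matrix.diagonal D * S⁻¹) :
    ∃ (ι : Type) (b : Module.Basis ι ℂ (Matrix (Fin n) (Fin n) ℂ)) (μ : ι → ℂ),
      ∀ i, -(C⁻¹ * b i * C)ᵀ = μ i • b i := by
  haveI : Invertible C := hC.invertible
  haveI : Invertible S := hS.invertible
  haveI : Invertible ((Cᵀ)⁻¹) := by
    rw [← Matrix.transpose_nonsing_inv]
    infer_instance
  haveI : Invertible S⁻¹ :=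
    ⟨S, Matrix.mul_inv_of_invertible S, Matrix.inv_mul_of_invertible S⟩
  haveI : Invertible ((S⁻¹)ᵀ) := Matrix.invertibleTranspose _
  -- entries of D are nonzero
  have hD : ∀ j, D j ≠ 0 := by
    have hdiag : Matrix.diagonal D = S⁻¹ * (C * (Cᵀ)⁻¹) * S := by
      rw [hA]
      simp only [← Matrix.mul_assoc]
      rw [Matrix.inv_mul_of_invertible, one_mul, Matrix.inv_mul_cancel_right_of_invertible]
    have hDu : IsUnit (Matrix.diagonal D) := by
      rw [hdiag]
      exact ((isUnit_of_invertible S⁻¹).mul ((isUnit_of_invertible C).mul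
        (isUnit_of_invertible (Cᵀ)⁻¹))).mul (isUnit_of_invertible S)
    rw [Matrix.isUnit_diagonal] at hDu
    intro j
    exact (hDu.map (Pi.evalMonoidHom _ j)).ne_zero
  set R : Matrix (Fin n) (Fin n) ℂ := (S⁻¹)ᵀ with hRdef
  set B : Matrix (Fin n) (Fin n) ℂ := C⁻¹ * Cᵀ with hBdef
  -- B = R * diagonal D * Sᵀ and hence B * R = R * diagonal D
  have hBR : B * R = R * Matrix.diagonal D := by
    have hBt : B = R * (Matrix.diagonal D * Sᵀ) := by
      have h0 := congrArg Matrix.transpose hA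
      rwa [Matrix.transpose_mul, Matrix.transpose_nonsing_inv, Matrix.transpose_transpose,
        Matrix.transpose_mul, Matrix.transpose_mul, Matrix.diagonal_transpose,
        ← hRdef, ← hBdef] at h0
    rw [hBt, Matrix.mul_assoc, Matrix.mul_assoc, hRdef, ← Matrix.transpose_mul,
      Matrix.nonsing_inv_mul S (isUnit_det_of_invertible S), Matrix.transpose_one,
      Matrix.mul_one]
  set F : Fin n × Fin n → Matrix (Fin n) (Fin n) ℂ :=
    fun p => R * Matrix.single p.1 p.2 1 * Rᵀ with hFdef
  have hTF : ∀ j k : Fin n, B * (F (j, k))ᵀ = D k • F (k, j) := by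
    intro j k
    have h1 : (F (j, k))ᵀ = R * Matrix.single k j 1 * Rᵀ := by
      rw [hFdef]
      simp only [Matrix.transpose_mul, Matrix.transpose_transpose, transpose_sbm,
        Matrix.mul_assoc]
    rw [h1, ← Matrix.mul_assoc, ← Matrix.mul_assoc, hBR, Matrix.mul_assoc R,
      diagonal_mul_sbm D k j, Matrix.mul_smul, Matrix.smul_mul]
  -- square roots
  have hsq : ∀ j k : Fin n, ∃ z : ℂ, z ^ 2 = D j * D k := fun j k =>
    IsAlgClosed.exists_pow_nat_eq (D j * D k) (by norm_num)
  obtain ⟨m, hm2, hmanti⟩ : ∃ m : Fin n → Fin n → ℂ,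
      (∀ j k, m j k ^ 2 = D j * D k) ∧ (∀ j k, j ≠ k → m k j = -(m j k)) := by
    refine ⟨fun j k => if j < k then (hsq j k).choose else -(hsq k j).choose, ?_, ?_⟩
    · intro j k
      by_cases h : j < k
      · simp only [if_pos h]
        exact (hsq j k).choose_spec
      · simp only [if_neg h]
        rw [neg_sq, (hsq k j).choose_spec, mul_comm]
    · intro j k hjk
      rcases lt_or_gt_of_ne hjk with h | h
      · simp only [if_pos h, if_neg (by omega : ¬ k < j)]
      · simp only [if_pos h, if_neg (by omega : ¬ j < k), neg_neg]
  have hmne : ∀ j k, m j k ≠ 0 := by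
    intro j k h0
    have h1 := hm2 j k
    rw [h0, zero_pow two_ne_zero] at h1
    rcases mul_eq_zero.mp h1.symm with h | h
    · exact hD j h
    · exact hD k h
  set Yv : Fin n × Fin n → Matrix (Fin n) (Fin n) ℂ :=
    fun p => if p.1 = p.2 then F p else m p.1 p.2 • F p - D p.2 • F (p.2, p.1) with hYvdef
  set muv : Fin n × Fin n → ℂ :=
    fun p => if p.1 = p.2 then -(D p.1) else m p.1 p.2 with hmuvdef
  have heig : ∀ p : Fin n × Fin n, -(B * (Yv p)ᵀ) = muv p • Yv p := by
    rintro ⟨j, k⟩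
    by_cases hjk : j = k
    · subst hjk
      simp only [hYvdef, hmuvdef, if_pos rfl]
      rw [hTF j j, neg_smul, ← neg_smul]
    · simp only [hYvdef, hmuvdef, if_neg hjk]
      rw [Matrix.transpose_sub, Matrix.transpose_smul, Matrix.transpose_smul,
        Matrix.mul_sub, Matrix.mul_smul, Matrix.mul_smul, hTF j k, hTF k j]
      have hmm : m j k * m j k = D j * D k := by rw [← sq]; exact hm2 j k
      match_scalars
      · ring
      · linear_combination -hmm
  -- Yv spans
  have hspanY : ⊤ ≤ Submodule.span ℂ (Set.range Yv) := by
    have hFb : F = ⇑((Matrix.stdBasis ℂ (Fin n) (Fin n)).map (conjEquiv R)) := by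
      funext p
      obtain ⟨j, k⟩ := p
      rw [Module.Basis.map_apply, Matrix.stdBasis_eq_single, conjEquiv_apply]
    have hspanF : Submodule.span ℂ (Set.range F) = ⊤ := by
      rw [hFb]
      exact Module.Basis.span_eq _
    have hmem : ∀ p : Fin n × Fin n, F p ∈ Submodule.span ℂ (Set.range Yv) := by
      rintro ⟨j, k⟩
      by_cases hjk : j = k
      · subst hjk
        have : Yv (j, j) = F (j, j) := by simp [hYvdef]
        rw [← this]
        exact Submodule.subset_span ⟨(j, j), rfl⟩
      · have hF : F (j, k) = (2 * m j k)⁻¹ • Yv (j, k) - (2 * D j)⁻¹ • Yv (k, j) := by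
          have hYjk : Yv (j, k) = m j k • F (j, k) - D k • F (k, j) := by
            simp [hYvdef, hjk]
          have hYkj : Yv (k, j) = -(m j k) • F (k, j) - D j • F (j, k) := by
            simp only [hYvdef, if_neg (Ne.symm hjk)]
            rw [hmanti j k hjk]
          rw [hYjk, hYkj]
          have hmm : m j k * m j k = D j * D k := by rw [← sq]; exact hm2 j k
          have h2m : (2 : ℂ) * m j k ≠ 0 := mul_ne_zero two_ne_zero (hmne j k)
          have h2d : (2 : ℂ) * D j ≠ 0 := mul_ne_zero two_ne_zero (hD j)
          match_scalars
          · field_simp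
            rw [div_self (hmne j k), div_self (hD j)]; norm_num
          · field_simp [hmne j k, hD j]
            first
            | linear_combination hmm
            | linear_combination -hmm
            | linear_combination (2 : ℂ) * hmm
            | linear_combination (-2 : ℂ) * hmm
        rw [hF]
        exact sub_mem (Submodule.smul_mem _ _ (Submodule.subset_span ⟨(j, k), rfl⟩))
          (Submodule.smul_mem _ _ (Submodule.subset_span ⟨(k, j), rfl⟩))
    rw [← hspanF]
    exact Submodule.span_le.mpr (Set.range_subset_iff.mpr hmem)
  have hcard : Fintype.card (Fin n × Fin n)
      = Module.finrank ℂ (Matrix (Fin n) (Fin n) ℂ) := by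
    simp [Module.finrank_matrix]
  let basisY := basisOfTopLeSpanOfCardEqFinrank Yv hspanY hcard
  have hbY : ∀ p, basisY p = Yv p := fun p =>
    congrFun (coe_basisOfTopLeSpanOfCardEqFinrank Yv hspanY hcard) p
  refine ⟨Fin n × Fin n, basisY.map (lmulEquiv C), muv, ?_⟩
  intro p
  rw [Module.Basis.map_apply, lmulEquiv_apply, hbY p, Matrix.inv_mul_cancel_left_of_invertible,
    Matrix.transpose_mul]
  have h2 := congrArg (fun X => C * X) (heig p)
  simp only [Matrix.mul_neg, Matrix.mul_smul] at h2
  rw [hBdef, Matrix.mul_assoc C⁻¹ Cᵀ _, Matrix.mul_inv_cancel_left_of_invertible] at h2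
  exact h2

end Stmt9Aux

/-- For an invertible n×n complex matrix C, the outer automorphism
    Out_C : X ↦ −(C⁻¹ X C)ᵀ of M_n(ℂ) admits a basis of eigenvectors if and only if
    the matrix C·(Cᵀ)⁻¹ is diagonalizable. -/
theorem stmt9 (n : ℕ) (hn : 1 ≤ n) (C : Matrix (Fin n) (Fin n) ℂ) (hC : IsUnit C) :
    (∃ (ι : Type) (b : Module.Basis ι ℂ (Matrix (Fin n) (Fin n) ℂ)) (μ : ι → ℂ),
        ∀ i, -(C⁻¹ * b i * C)ᵀ = μ i • b i) ↔
      ∃ (S : Matrix (Fin n) (Fin n) ℂ) (D : Fin n → ℂ),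
        IsUnit S ∧ C * (Cᵀ)⁻¹ = S * Matrix.diagonal D * S⁻¹ := by
  constructor
  · rintro ⟨ι, b, μ, hb⟩
    exact stmt9_fwd hn C hC ι b μ hb
  · rintro ⟨S, D, hS, hA⟩
    exact stmt9_bwd C hC S D hS hA
end

section
/- Let n ≥ 1 and let A, C be invertible n×n complex matrices. The maps Ad_A : X ↦ A⁻¹ X A and Out_C : X ↦ −(C⁻¹ X C)ᵀ commute, i.e. Out_C(Ad_A X) = Ad_A(Out_C X) for every n×n complex matrix X, if and only if there exists a nonzero scalar r ∈ ℂ with A · C · Aᵀ = r · C. -/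
open Matrix

-- helper: conjugation-equality iff
lemma conj_eq_iff {n : ℕ} (P Q X Y : Matrix (Fin n) (Fin n) ℂ)
    [Invertible P] [Invertible Q] : P * X * Q = P * Y * Q ↔ X = Y := by
  constructor
  · intro h
    have := congrArg (fun Z => ⅟P * Z * ⅟Q) h
    simpa [mul_assoc] using this
  · rintro rfl; rfl

/-- For invertible n×n complex matrices A and C, the maps Ad_A : X ↦ A⁻¹ X A and
    Out_C : X ↦ −(C⁻¹ X C)ᵀ commute if and only if there exists a nonzero r ∈ ℂ with
    A·C·Aᵀ = r·C. -/
theorem stmt10 (n : ℕ) (hn : 1 ≤ n) (A C : Matrix (Fin n) (Fin n) ℂ)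
    (hA : IsUnit A) (hC : IsUnit C) :
    (∀ X : Matrix (Fin n) (Fin n) ℂ,
        -(C⁻¹ * (A⁻¹ * X * A) * C)ᵀ = A⁻¹ * (-(C⁻¹ * X * C)ᵀ) * A) ↔
      ∃ r : ℂ, r ≠ 0 ∧ A * C * Aᵀ = r • C := by
  have hAd : IsUnit A.det := (isUnit_iff_isUnit_det A).mp hA
  have hCd : IsUnit C.det := (isUnit_iff_isUnit_det C).mp hC
  haveI : Invertible A := A.invertibleOfIsUnitDet hAd
  haveI : Invertible C := C.invertibleOfIsUnitDet hCd
  haveI : Invertible Aᵀ := A.invertibleTranspose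
  haveI : Invertible Cᵀ := C.invertibleTranspose
  set M : Matrix (Fin n) (Fin n) ℂ := A * C * Aᵀ * C⁻¹ with hM
  have key : ∀ X : Matrix (Fin n) (Fin n) ℂ,
      (-(C⁻¹ * (A⁻¹ * X * A) * C)ᵀ = A⁻¹ * (-(C⁻¹ * X * C)ᵀ) * A) ↔
        X * M = M * X := by
    intro X
    rw [mul_neg, neg_mul, neg_inj, ← transpose_inj]
    simp only [transpose_mul, transpose_transpose]
    rw [show (A⁻¹)ᵀ = (Aᵀ)⁻¹ from A.transpose_nonsing_inv,
      show A⁻¹ = ⅟A from (invOf_eq_nonsing_inv A).symm,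
      show C⁻¹ = ⅟C from (invOf_eq_nonsing_inv C).symm,
      show (Aᵀ)⁻¹ = ⅟(Aᵀ) from (invOf_eq_nonsing_inv Aᵀ).symm, hM,
      show C⁻¹ = ⅟C from (invOf_eq_nonsing_inv C).symm]
    constructor
    · intro h
      have h2 := congrArg (fun Z => (A * C) * Z * (Aᵀ * ⅟C)) h
      simpa [mul_assoc] using h2
    · intro h
      have h2 := congrArg (fun Z => (⅟C * ⅟A) * Z * (C * ⅟(Aᵀ))) h
      simpa [mul_assoc] using h2
  rw [forall_congr' key]
  constructor
  · intro h
    have hscal : M ∈ Set.range (Matrix.scalar (Fin n)) :=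
      mem_range_scalar_of_commute_single (fun i j _ => h _)
    obtain ⟨r, hr⟩ := hscal
    have hMC : M * C = A * C * Aᵀ := by
      rw [hM]
      simp [mul_assoc, Matrix.nonsing_inv_mul C hCd]
    refine ⟨r, ?_, ?_⟩
    · rintro rfl
      have : M = 0 := by simp [← hr]
      have h0 : A * C * Aᵀ = 0 := by rw [← hMC, this, zero_mul]
      have : (A * C * Aᵀ).det = 0 := by haveI : Nonempty (Fin n) := ⟨⟨0, hn⟩⟩; rw [h0, det_zero]
      rw [det_mul, det_mul, det_transpose] at this
      rcases mul_eq_zero.mp this with h' | h'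
      · rcases mul_eq_zero.mp h' with h'' | h''
        · exact hAd.ne_zero h''
        · exact hCd.ne_zero h''
      · exact hAd.ne_zero h'
    · rw [← hMC, ← hr]
      simp [Matrix.scalar_apply, smul_eq_diagonal_mul]
  · rintro ⟨r, hr0, hr⟩ X
    have : M = r • 1 := by
      rw [hM, hr]
      simp [Matrix.mul_nonsing_inv C hCd, Matrix.smul_mul]
    rw [this]
    simp [Matrix.mul_smul, Matrix.smul_mul]
end

section
/- Let N = (ℤ_3 × ℤ_3) \ {(0,0)} and consider the action of H₃ on 3-element subsets T ⊆ N induced by the right action v ↦ vA on row vectors. Restrict to those 3-element subsets T ⊆ N whose element sum is nonzero, Σ_{v∈T} v ≠ (0,0). Then: (a) every such T lies in the H₃-orbit of T₁ = {(0,1),(0,2),(1,0)} or in the H₃-orbit of T₂ = {(0,1),(1,0),(1,1)}; (b) T₁ and T₂ lie in different H₃-orbits; and (c) each of these two orbits contains exactly 24 subsets. -/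
/-- H₃: 2×2 matrices over ℤ₃ with determinant 1 or −1. -/
def H3 : Set (Matrix (Fin 2) (Fin 2) (ZMod 3)) :=
  {A | A.det = 1 ∨ A.det = -1}

/-- The right action of a 2×2 matrix A on a row vector v ∈ ℤ₃ × ℤ₃, v ↦ vA. -/
def actv (A : Matrix (Fin 2) (Fin 2) (ZMod 3)) (v : ZMod 3 × ZMod 3) : ZMod 3 × ZMod 3 :=
  (v.1 * A 0 0 + v.2 * A 1 0, v.1 * A 0 1 + v.2 * A 1 1)

/-- T′ lies in the H₃-orbit of T (elementwise action on subsets). -/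
def sameOrbit (T T' : Finset (ZMod 3 × ZMod 3)) : Prop :=
  ∃ A ∈ H3, T.image (actv A) = T'

instance sameOrbit.dec : ∀ T T', Decidable (sameOrbit T T') := fun T T' =>
  decidable_of_iff (∃ A : Matrix (Fin 2) (Fin 2) (ZMod 3),
    (A 0 0 * A 1 1 - A 0 1 * A 1 0 = 1 ∨ A 0 0 * A 1 1 - A 0 1 * A 1 0 = -1)
    ∧ T.image (actv A) = T')
    (by simp only [sameOrbit, H3, Set.mem_setOf_eq, Matrix.det_fin_two])

def orbitFinset (T₀ : Finset (ZMod 3 × ZMod 3)) : Finset (Finset (ZMod 3 × ZMod 3)) :=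
  (Finset.univ.filter (fun A : Matrix (Fin 2) (Fin 2) (ZMod 3) =>
    A 0 0 * A 1 1 - A 0 1 * A 1 0 = 1 ∨ A 0 0 * A 1 1 - A 0 1 * A 1 0 = -1)).image
    (fun A => T₀.image (actv A))

lemma ncard_orbit (T₀ : Finset (ZMod 3 × ZMod 3)) :
    {T | sameOrbit T₀ T}.ncard = (orbitFinset T₀).card := by
  rw [← Set.ncard_coe_finset]
  congr 1
  ext T
  simp [orbitFinset, sameOrbit, H3, Matrix.det_fin_two, eq_comm]

set_option maxRecDepth 4000000 in
/-- (a) every 3-element subset of (ℤ₃×ℤ₃) \ {(0,0)} with nonzero element sum lies in the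
    H₃-orbit of T₁ = {(0,1),(0,2),(1,0)} or of T₂ = {(0,1),(1,0),(1,1)};
    (b) T₁ and T₂ lie in different H₃-orbits;
    (c) each of these two orbits contains exactly 24 subsets. -/
theorem stmt12 :
    (∀ T : Finset (ZMod 3 × ZMod 3), T.card = 3 → ((0 : ZMod 3), (0 : ZMod 3)) ∉ T →
      (∑ v ∈ T, v) ≠ 0 →
      sameOrbit ({((0 : ZMod 3), (1 : ZMod 3)), (0, 2), (1, 0)} : Finset (ZMod 3 × ZMod 3)) T ∨
      sameOrbit ({((0 : ZMod 3), (1 : ZMod 3)), (1, 0), (1, 1)} : Finset (ZMod 3 × ZMod 3)) T) ∧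
    ¬ sameOrbit ({((0 : ZMod 3), (1 : ZMod 3)), (0, 2), (1, 0)} : Finset (ZMod 3 × ZMod 3))
        ({((0 : ZMod 3), (1 : ZMod 3)), (1, 0), (1, 1)} : Finset (ZMod 3 × ZMod 3)) ∧
    Set.ncard {T : Finset (ZMod 3 × ZMod 3) |
        sameOrbit ({((0 : ZMod 3), (1 : ZMod 3)), (0, 2), (1, 0)} : Finset (ZMod 3 × ZMod 3)) T}
      = 24 ∧
    Set.ncard {T : Finset (ZMod 3 × ZMod 3) |
        sameOrbit ({((0 : ZMod 3), (1 : ZMod 3)), (1, 0), (1, 1)} : Finset (ZMod 3 × ZMod 3)) T}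
      = 24 := by
  refine ⟨by decide, by decide, ?_, ?_⟩ <;> rw [ncard_orbit] <;> decide
end

section
/- Let ε be a solution of the contraction system for the Pauli grading of sl(n,ℂ), and let a : ℤ_n × ℤ_n → ℂ be any function with a(u) ≠ 0 for all u. Then the function ε̃ defined by ε̃(u,v) = a(u) · a(v) · a(u+v)⁻¹ · ε(u,v) is also a solution of the contraction system for the Pauli grading of sl(n,ℂ). -/
open Matrix

/-- A symmetric function ε is a solution of the contraction system for the Pauli grading
    of sl(n,ℂ): for all i, j, k ∈ (ℤ_n × ℤ_n) \ {(0,0)} the (rewritten) Jacobi identity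
    for the deformed bracket [X_u, X_v]_ε = ε(u,v)·⁅X_u, X_v⁆ holds. -/
def IsPauliSol (n : ℕ) (ε : (ZMod n × ZMod n) × (ZMod n × ZMod n) → ℂ) : Prop :=
  (∀ u v, ε (u, v) = ε (v, u)) ∧
    ∀ i j k : ZMod n × ZMod n, i ≠ (0, 0) → j ≠ (0, 0) → k ≠ (0, 0) →
      (ε (i, j + k) * ε (j, k)) • ⁅Xm n i, ⁅Xm n j, Xm n k⁆⁆ +
        (ε (k, i + j) * ε (i, j)) • ⁅Xm n k, ⁅Xm n i, Xm n j⁆⁆ +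
        (ε (j, k + i) * ε (k, i)) • ⁅Xm n j, ⁅Xm n k, Xm n i⁆⁆ = 0

/-- If ε is a solution of the contraction system for the Pauli grading of sl(n,ℂ) and
    a : ℤ_n × ℤ_n → ℂ is nowhere zero, then ε̃(u,v) = a(u)·a(v)·a(u+v)⁻¹·ε(u,v) is again
    a solution. -/
theorem stmt15 (n : ℕ) (hn : 1 ≤ n) (ε : (ZMod n × ZMod n) × (ZMod n × ZMod n) → ℂ)
    (hε : IsPauliSol n ε) (a : ZMod n × ZMod n → ℂ) (ha : ∀ u, a u ≠ 0) :
    IsPauliSol n (fun p => a p.1 * a p.2 * (a (p.1 + p.2))⁻¹ * ε p) := by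
  obtain ⟨hsym, hjac⟩ := hε
  constructor
  · intro u v
    simp only
    rw [hsym u v, add_comm u v]
    ring
  · intro i j k hi hj hk
    have key := hjac i j k hi hj hk
    have h1 : a (j + k) ≠ 0 := ha _
    have h2 : a (i + j) ≠ 0 := ha _
    have h3 : a (k + i) ≠ 0 := ha _
    have h4 : a (i + j + k) ≠ 0 := ha _
    set c : ℂ := a i * a j * a k * (a (i + j + k))⁻¹ with hc
    have e1 : a i * a (j + k) * (a (i + (j + k)))⁻¹ * ε (i, j + k) *
        (a j * a k * (a (j + k))⁻¹ * ε (j, k)) = c * (ε (i, j + k) * ε (j, k)) := by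
      rw [hc, ← add_assoc]
      field_simp
    have e2 : a k * a (i + j) * (a (k + (i + j)))⁻¹ * ε (k, i + j) *
        (a i * a j * (a (i + j))⁻¹ * ε (i, j)) = c * (ε (k, i + j) * ε (i, j)) := by
      have h : k + (i + j) = i + j + k := by ring
      rw [hc, h]
      field_simp
    have e3 : a j * a (k + i) * (a (j + (k + i)))⁻¹ * ε (j, k + i) *
        (a k * a i * (a (k + i))⁻¹ * ε (k, i)) = c * (ε (j, k + i) * ε (k, i)) := by
      have h : j + (k + i) = i + j + k := by ring
      rw [hc, h]
      field_simp
    clear_value c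
    simp only
    rw [e1, e2, e3, ← smul_smul c (ε (i, j + k) * ε (j, k)),
      ← smul_smul c (ε (k, i + j) * ε (i, j)), ← smul_smul c (ε (j, k + i) * ε (k, i)),
      ← smul_add, ← smul_add, key, smul_zero]
end
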